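/- Let σ : ℝ → ℝ be even and polynomially bounded, let λ ≥ 0, let z ∼ N(0,1) and ξ ∼ N(0,1) independent, and set Y = √λ · σ(z) + ξ. Then the conditional expectation E[z | Y] = 0 almost surely. -/
import Mathlib


open MeasureTheory ProbabilityTheory

/-- Standard Gaussian density on ℝ. -/
noncomputable def gphi (x : ℝ) : ℝ := Real.exp (-(x ^ 2) / 2) / Real.sqrt (2 * Real.pi)

/-- σ is polynomially bounded. -/
def PolyBounded (σ : ℝ → ℝ) : Prop :=
  ∃ (C : ℝ) (k : ℕ), 0 < C ∧ 0 < k ∧ ∀ x : ℝ, |σ x| ≤ C * (1 + |x| ^ k)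

/-- For even polynomially bounded σ, `λ ≥ 0`, and `Y = √λ σ(z) + ξ` with `z, ξ`
i.i.d. standard Gaussians, the conditional expectation `E[z | Y = y]` vanishes for
every `y`: the numerator `∫ z φ(z) φ(y − √λ σ(z)) dz` is zero (hence the ratio
defining `E[z | Y = y]` is zero), i.e. `E[z | Y] = 0` almost surely. -/
theorem stmt6 (σ : ℝ → ℝ) (hmeas : Measurable σ) (hpb : PolyBounded σ)
    (heven : ∀ x : ℝ, σ (-x) = σ x) (lam : ℝ) (hlam : 0 ≤ lam) :
    ∀ y : ℝ,
      (∫ z : ℝ, z * gphi z * gphi (y - Real.sqrt lam * σ z)) /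
        (∫ z : ℝ, gphi z * gphi (y - Real.sqrt lam * σ z)) = 0 := by
  intro y
  have h : (∫ z : ℝ, z * gphi z * gphi (y - Real.sqrt lam * σ z)) = 0 := by
    have key : ∀ z : ℝ, (-z) * gphi (-z) * gphi (y - Real.sqrt lam * σ (-z))
        = -(z * gphi z * gphi (y - Real.sqrt lam * σ z)) := by
      intro z
      simp [heven, gphi]
    have hneg := MeasureTheory.integral_neg_eq_self
      (fun z : ℝ => z * gphi z * gphi (y - Real.sqrt lam * σ z)) volume
    have hI : (∫ z : ℝ, z * gphi z * gphi (y - Real.sqrt lam * σ z))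
        = -(∫ z : ℝ, z * gphi z * gphi (y - Real.sqrt lam * σ z)) := by
      conv_lhs => rw [← hneg]
      simp only [key, integral_neg]
    linarith
  rw [h, zero_div]
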